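/- Let S be a finite poset and let A, B be antichains of S. For the simple S-spaces k_A and k_B (with ambient space k and subspaces k at s iff some element of the antichain is ≤ s), the space Hom_{S-spaces}(k_A, k_B) equals k if B ≤ A in the antichain order (for every a ∈ A there exists b ∈ B with b ≤ a), and equals 0 otherwise. -/

import Mathlib

/-- An `S`-space over a field `k`: a finite-dimensional `k`-vector space together with a
monotone family of subspaces indexed by the poset `S`. -/
structure PSp (k : Type) [Field k] (S : Type) [Preorder S] where
  carrier : Type
  [acg : AddCommGroup carrier]
  [mod : Module k carrier]
  [fin : FiniteDimensional k carrier]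
  sub : S → Submodule k carrier
  mono : ∀ {s t : S}, s ≤ t → sub s ≤ sub t

attribute [instance] PSp.acg PSp.mod PSp.fin

variable {k : Type} [Field k] {S : Type} [PartialOrder S] [Fintype S]

/-- A morphism of `S`-spaces: a `k`-linear map respecting the distinguished subspaces. -/
@[ext]
structure PHom (U V : PSp k S) where
  toLinearMap : U.carrier →ₗ[k] V.carrier
  maps : ∀ s : S, ∀ x ∈ U.sub s, toLinearMap x ∈ V.sub s

/-- Composition of morphisms of `S`-spaces. -/
def PHom.comp {U V W : PSp k S} (g : PHom V W) (f : PHom U V) : PHom U W :=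
  ⟨g.toLinearMap ∘ₗ f.toLinearMap, fun s x hx => g.maps s _ (f.maps s x hx)⟩

/-- The identity morphism of an `S`-space. -/
def PHom.id (U : PSp k S) : PHom U U := ⟨LinearMap.id, fun _ _ hx => hx⟩

/-- A morphism `f : U → V` of `S`-spaces is proper if `f(U(s)) = V(s) ∩ im f` for all `s`. -/
def PHom.Proper {U V : PSp k S} (f : PHom U V) : Prop :=
  ∀ s : S, (U.sub s).map f.toLinearMap = V.sub s ⊓ LinearMap.range f.toLinearMap

open Classical in
/-- The `S`-space `k_A` associated to an antichain `A`: ambient space `k`, with subspace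
`k` at `s` iff `a ≤ s` for some `a ∈ A`, and `0` otherwise. -/
noncomputable def kASp (k : Type) [Field k] {S : Type} [PartialOrder S] (A : Set S) :
    PSp k S where
  carrier := k
  sub s := if ∃ a ∈ A, a ≤ s then ⊤ else ⊥
  mono := by
    intro s t h
    try dsimp only
    by_cases hs : ∃ a ∈ A, a ≤ s
    · obtain ⟨a, ha, has⟩ := hs
      rw [if_pos ⟨a, ha, has⟩, if_pos ⟨a, ha, has.trans h⟩]
    · rw [if_neg hs]
      exact bot_le

/-- Isomorphism of `S`-spaces. -/
def PIso {k : Type} [Field k] {S : Type} [PartialOrder S] (U V : PSp k S) : Prop :=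
  ∃ (f : PHom U V) (g : PHom V U), f.comp g = PHom.id V ∧ g.comp f = PHom.id U

/-- A nonzero `S`-space is simple if every nonzero proper monomorphism into it is an
isomorphism. -/
def PSimple {k : Type} [Field k] {S : Type} [PartialOrder S] (V : PSp k S) : Prop :=
  (∃ x : V.carrier, x ≠ 0) ∧
  ∀ (U : PSp k S) (g : PHom U V), g.toLinearMap ≠ 0 → Function.Injective g.toLinearMap →
    g.Proper → ∃ h : PHom V U, g.comp h = PHom.id V ∧ h.comp g = PHom.id U

/-- For antichains `A, B` of `S`, `Hom(k_A, k_B)` equals `k` (via `f ↦ f(1)`)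
if `B ≤ A` in the antichain order (every `a ∈ A` lies above some `b ∈ B`), and equals `0`
otherwise. -/
theorem stmt18 (A B : Set S) (hA : IsAntichain (· ≤ ·) A) (hB : IsAntichain (· ≤ ·) B) :
    ((∀ a ∈ A, ∃ b ∈ B, b ≤ a) →
      Function.Bijective (fun f : PHom (kASp k A) (kASp k B) => f.toLinearMap (1 : k))) ∧
    (¬ (∀ a ∈ A, ∃ b ∈ B, b ≤ a) →
      ∀ f : PHom (kASp k A) (kASp k B), f.toLinearMap = 0) := by
  classical
  constructor
  · intro h
    constructor
    · intro f g hfg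
      apply PHom.ext
      exact LinearMap.ext_ring hfg
    · show ∀ c : k, ∃ f : PHom (kASp k A) (kASp k B), f.toLinearMap (1:k) = c
      intro c
      refine ⟨⟨c • (LinearMap.id : k →ₗ[k] k), ?_⟩, ?_⟩
      swap
      · show c • (1:k) = c
        simp
      intro s x hx
      by_cases hs : ∃ a ∈ A, a ≤ s
      · obtain ⟨a, ha, has⟩ := hs
        obtain ⟨b, hb, hba⟩ := h a ha
        show _ ∈ (kASp k B).sub s
        simp only [kASp]
        rw [if_pos (⟨b, hb, hba.trans has⟩ : ∃ b' ∈ B, b' ≤ s)]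
        trivial
      · have : x = 0 := by
          have hx' : x ∈ (kASp k A).sub s := hx
          simp only [kASp, if_neg hs] at hx'
          exact hx'
        rw [this]
        convert Submodule.zero_mem ((kASp k B).sub s) using 1
        exact map_zero (c • (LinearMap.id : k →ₗ[k] k))
  · intro h f
    push_neg at h
    obtain ⟨a, ha, hna⟩ := h
    have h1 : (1 : k) ∈ (kASp k A).sub a := by
      simp only [kASp]
      rw [if_pos (⟨a, ha, le_refl a⟩ : ∃ a' ∈ A, a' ≤ a)]
      trivial
    have h2 := f.maps a (1:k) h1
    have hb : ¬ ∃ b ∈ B, b ≤ a := by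
      rintro ⟨b, hb, hba⟩
      exact hna b hb hba
    simp only [kASp, if_neg hb, Submodule.mem_bot] at h2
    exact LinearMap.ext_ring h2
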